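/- Let n ≥ 2, let κ : [-1,1] → [0,∞) be measurable with ∫_{S^{n-1}} κ(v·v') dv = 1 for each v' ∈ S^{n-1}, and let p be a path-length density with ∫₀^∞ s² p(s) ds = D₀ < ∞. With the scaling θ(ε) = ε², for every fixed ξ ∈ ℝⁿ \ {0} and v' ∈ S^{n-1}, the quantity Λ_ε(ξ,v') = ∫_{S^{n-1}} ∫₀^∞ κ(v'·v) p(s) (cos(ε (v·ξ) s) − 1)/θ(ε) ds dv converges as ε → 0 to −D̃₁ |ξ|², where D̃₁ = (D₀/2) ∫_{S^{n-1}} κ(v·v') (v·e_ξ)² dv and e_ξ = ξ/|ξ|. -/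

import Mathlib

open MeasureTheory Metric Filter Set
open scoped ENNReal

noncomputable section

/-- Euclidean space `ℝⁿ`. -/
abbrev Euc (n : ℕ) := EuclideanSpace ℝ (Fin n)

/-- The unit sphere `S^{n-1}` in `ℝⁿ`. -/
abbrev Sph (n : ℕ) := Metric.sphere (0 : Euc n) 1

/-- The normalized surface measure on the unit sphere (total mass `1`): the surface
measure divided by its total mass. -/
noncomputable def sphμ (n : ℕ) : Measure (Sph n) :=
  ((volume : Measure (Euc n)).toSphere Set.univ)⁻¹ • (volume : Measure (Euc n)).toSphere

/-- A path-length density: measurable, nonnegative, integrating to one on `(0,∞)`, with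
finite first moment. -/
def IsPathDensity (p : ℝ → ℝ) : Prop :=
  Measurable p ∧ (∀ s, 0 ≤ p s) ∧ (∫ s in Set.Ioi (0 : ℝ), p s = 1) ∧
    IntegrableOn (fun s => s * p s) (Set.Ioi (0 : ℝ))

/-- A normalized nonnegative angular kernel `κ` on `[-1,1]`:
`∫_{S^{n-1}} κ(v·v') dv = 1` for every `v'`. -/
def IsAngularKernel (n : ℕ) (κ : ℝ → ℝ) : Prop :=
  Measurable κ ∧ (∀ μ ∈ Set.Icc (-1 : ℝ) 1, 0 ≤ κ μ) ∧
    ∀ v' : Sph n, ∫ v, κ (inner ℝ (v : Euc n) (v' : Euc n)) ∂(sphμ n) = 1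

lemma one_sub_cos_le_aux (t : ℝ) : 1 - Real.cos t ≤ t ^ 2 / 2 := by
  have e : (2:ℝ) * (t/2) = t := by ring
  have h2 := Real.cos_two_mul (t/2)
  rw [e] at h2
  have hs := Real.sin_sq_add_cos_sq (t/2)
  have hle := Real.sin_sq_le_sq (x := t/2)
  nlinarith

lemma tendsto_sin_div_aux : Tendsto (fun y : ℝ => Real.sin y / y) (nhdsWithin 0 {0}ᶜ) (nhds 1) := by
  have h := Real.hasDerivAt_sin 0
  rw [hasDerivAt_iff_tendsto_slope] at h
  simpa [slope_fun_def_field, Real.cos_zero] using h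

lemma tendsto_cos_sub_one_div_sq :
    Tendsto (fun x : ℝ => (Real.cos x - 1) / x ^ 2) (nhdsWithin 0 {0}ᶜ) (nhds (-(1/2))) := by
  have hhalf : Tendsto (fun x : ℝ => x / 2) (nhdsWithin 0 {0}ᶜ) (nhdsWithin 0 {0}ᶜ) := by
    rw [tendsto_nhdsWithin_iff]
    constructor
    · have h0 : Tendsto (fun x : ℝ => x / 2) (nhds 0) (nhds 0) := by
        simpa using (continuous_id.div_const (2:ℝ)).tendsto 0
      exact h0.mono_left nhdsWithin_le_nhds
    · filter_upwards [self_mem_nhdsWithin] with x hx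
      simp only [Set.mem_compl_iff, Set.mem_singleton_iff] at hx ⊢
      intro h; exact hx (by linarith)
  have h1 : Tendsto (fun x : ℝ => -(1/2) * (Real.sin (x/2) / (x/2)) ^ 2)
      (nhdsWithin 0 {0}ᶜ) (nhds (-(1/2) * 1 ^ 2)) :=
    (((tendsto_sin_div_aux.comp hhalf).pow 2).const_mul _)
  rw [show (-(1/2) * (1:ℝ) ^ 2) = -(1/2) by ring] at h1
  refine h1.congr' ?_
  filter_upwards [self_mem_nhdsWithin] with x hx
  simp only [Set.mem_compl_iff, Set.mem_singleton_iff] at hx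
  have e : (2:ℝ) * (x/2) = x := by ring
  have h2 := Real.cos_two_mul (x/2)
  rw [e] at h2
  have hs := Real.sin_sq_add_cos_sq (x/2)
  have hc : Real.cos x = 1 - 2 * Real.sin (x/2) ^ 2 := by nlinarith
  rw [hc]
  field_simp
  ring

lemma tendsto_cos_scaled (c : ℝ) :
    Tendsto (fun ε : ℝ => (Real.cos (ε * c) - 1) / ε ^ 2) (nhdsWithin 0 (Set.Ioi 0))
      (nhds (-(c ^ 2 / 2))) := by
  rcases eq_or_ne c 0 with rfl | hc
  · simpa using tendsto_const_nhds (α := ℝ) (x := (0:ℝ)) (f := nhdsWithin 0 (Set.Ioi 0))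
  · have hmap : Tendsto (fun ε : ℝ => ε * c) (nhdsWithin 0 (Set.Ioi 0)) (nhdsWithin 0 {0}ᶜ) := by
      rw [tendsto_nhdsWithin_iff]
      constructor
      · have h0 : Tendsto (fun ε : ℝ => ε * c) (nhds 0) (nhds 0) := by
          simpa using (continuous_mul_right c).tendsto (0:ℝ)
        exact h0.mono_left nhdsWithin_le_nhds
      · filter_upwards [self_mem_nhdsWithin] with x hx
        simp only [Set.mem_compl_iff, Set.mem_singleton_iff]
        exact mul_ne_zero (ne_of_gt hx) hc
    have h1 : Tendsto (fun ε : ℝ => (Real.cos (ε * c) - 1) / (ε * c) ^ 2 * c ^ 2)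
        (nhdsWithin 0 (Set.Ioi 0)) (nhds (-(1/2) * c ^ 2)) :=
      (tendsto_cos_sub_one_div_sq.comp hmap).mul_const _
    rw [show (-(1/2) * c ^ 2) = -(c ^ 2 / 2) by ring] at h1
    refine h1.congr' ?_
    filter_upwards [self_mem_nhdsWithin] with ε hε
    have hε' : (ε : ℝ) ≠ 0 := ne_of_gt hε
    field_simp

/-- Proposition 4.5 (a2): pointwise limit `Λ_ε → −D̃₁ |ξ|²` when the
path-length density has a finite second moment and `θ(ε) = ε²`. -/
theorem lambda_limit_finite_second_moment
    (n : ℕ) (hn : 2 ≤ n)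
    (κ : ℝ → ℝ) (hκ : IsAngularKernel n κ)
    (p : ℝ → ℝ) (hp : IsPathDensity p)
    (D₀ : ℝ) (hD₀int : IntegrableOn (fun s => s ^ 2 * p s) (Set.Ioi (0 : ℝ)))
    (hD₀ : ∫ s in Set.Ioi (0 : ℝ), s ^ 2 * p s = D₀)
    (ξ : Euc n) (hξ : ξ ≠ 0) (v' : Sph n) :
    Tendsto
      (fun ε : ℝ => ∫ v : Sph n, ∫ s in Set.Ioi (0 : ℝ),
        κ (inner ℝ (v' : Euc n) (v : Euc n)) * p s *
          (Real.cos (ε * inner ℝ (v : Euc n) ξ * s) - 1) / ε ^ 2 ∂volume ∂(sphμ n))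
      (nhdsWithin 0 (Set.Ioi (0 : ℝ)))
      (nhds (-(D₀ / 2 *
        ∫ v : Sph n, κ (inner ℝ (v : Euc n) (v' : Euc n)) *
          (inner ℝ (v : Euc n) (‖ξ‖⁻¹ • ξ) : ℝ) ^ 2 ∂(sphμ n)) * ‖ξ‖ ^ 2)) := by
  obtain ⟨hκm, hκ0, hκ1⟩ := hκ
  obtain ⟨hpm, hp0, -, -⟩ := hp
  haveI : SFinite (sphμ n) := by unfold sphμ; infer_instance
  set μ : Measure (Sph n) := sphμ n with hμdef
  set ν : Measure ℝ := (volume : Measure ℝ).restrict (Set.Ioi 0) with hνdef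
  set a : Sph n → ℝ := fun v => inner ℝ (v : Euc n) ξ with ha
  set k : Sph n → ℝ := fun v => κ (inner ℝ (v' : Euc n) (v : Euc n)) with hk
  -- basic facts
  have hnorm1 : ∀ v : Sph n, ‖(v : Euc n)‖ = 1 := fun v => norm_eq_of_mem_sphere v
  have hka : ∀ v : Sph n, |a v| ≤ ‖ξ‖ := by
    intro v
    have := abs_real_inner_le_norm (v : Euc n) ξ
    rwa [hnorm1 v, one_mul] at this
  have hka2 : ∀ v : Sph n, a v ^ 2 ≤ ‖ξ‖ ^ 2 := by
    intro v
    have h := hka v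
    have h2 : |a v| ^ 2 ≤ ‖ξ‖ ^ 2 := by
      apply pow_le_pow_left₀ (abs_nonneg _) h
    simpa [sq_abs] using h2
  have hk_meas : Measurable k :=
    hκm.comp ((Continuous.inner continuous_const continuous_subtype_val).measurable)
  have ha_meas : Measurable a :=
    (Continuous.inner continuous_subtype_val continuous_const).measurable
  -- integrability of k
  have hk_int : Integrable k μ := by
    have h1 := hκ1 v'
    have he : (fun v : Sph n => κ (inner ℝ (v : Euc n) (v' : Euc n))) = k := by
      funext v; simp only [hk, real_inner_comm]
    rw [he] at h1
    by_contra h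
    rw [integral_undef h] at h1
    norm_num at h1
  -- the dominating function
  set g : Sph n × ℝ → ℝ := fun z => |k z.1| * (‖ξ‖ ^ 2 / 2 * (z.2 ^ 2 * p z.2)) with hg
  have hg_int : Integrable g (μ.prod ν) :=
    hk_int.abs.mul_prod (hD₀int.const_mul _)
  -- the family of integrands on the product space
  set F : ℝ → Sph n × ℝ → ℝ := fun ε z =>
    k z.1 * p z.2 * (Real.cos (ε * a z.1 * z.2) - 1) / ε ^ 2 with hF
  have hF_meas : ∀ ε : ℝ, AEStronglyMeasurable (F ε) (μ.prod ν) := by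
    intro ε
    apply Measurable.aestronglyMeasurable
    apply Measurable.div_const
    apply Measurable.mul
    · exact (hk_meas.comp measurable_fst).mul (hpm.comp measurable_snd)
    · apply Measurable.sub _ measurable_const
      exact Real.continuous_cos.measurable.comp
        (((measurable_const.mul (ha_meas.comp measurable_fst)).mul measurable_snd))
  -- the uniform bound for positive ε
  have hbound : ∀ ε : ℝ, ε ∈ Set.Ioi (0:ℝ) → ∀ z : Sph n × ℝ, ‖F ε z‖ ≤ g z := by
    intro ε hε z
    have hε2 : (0:ℝ) < ε ^ 2 := pow_pos hε 2
    have hcos : |Real.cos (ε * a z.1 * z.2) - 1| ≤ (ε * a z.1 * z.2) ^ 2 / 2 := by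
      rw [abs_of_nonpos (by linarith [Real.cos_le_one (ε * a z.1 * z.2)])]
      have := one_sub_cos_le_aux (ε * a z.1 * z.2)
      linarith
    have h1 : ‖F ε z‖ = |k z.1| * (p z.2 * (|Real.cos (ε * a z.1 * z.2) - 1| / ε ^ 2)) := by
      simp only [hF, Real.norm_eq_abs, abs_div, abs_mul, abs_of_nonneg (hp0 z.2),
        abs_of_nonneg (le_of_lt hε2)]
      ring
    rw [h1]
    calc |k z.1| * (p z.2 * (|Real.cos (ε * a z.1 * z.2) - 1| / ε ^ 2))
        ≤ |k z.1| * (p z.2 * ((ε * a z.1 * z.2) ^ 2 / 2 / ε ^ 2)) := by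
          gcongr
          exact hp0 z.2
      _ = |k z.1| * (p z.2 * (a z.1 ^ 2 * z.2 ^ 2 / 2)) := by
          rw [mul_pow, mul_pow]
          field_simp
          rw [show |k z.1| * p z.2 * ε * a z.1 ^ 2 * z.2 ^ 2 / ε = |k z.1| * p z.2 * a z.1 ^ 2 * z.2 ^ 2 * (ε * ε⁻¹) by ring, mul_inv_cancel₀ (ne_of_gt hε), mul_one]
      _ ≤ |k z.1| * (p z.2 * (‖ξ‖ ^ 2 * z.2 ^ 2 / 2)) := by
          have h := hka2 z.1
          have h2 : a z.1 ^ 2 * z.2 ^ 2 / 2 ≤ ‖ξ‖ ^ 2 * z.2 ^ 2 / 2 := by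
            nlinarith [sq_nonneg z.2]
          exact mul_le_mul_of_nonneg_left
            (mul_le_mul_of_nonneg_left h2 (hp0 z.2)) (abs_nonneg _)
      _ = g z := by simp only [hg]; ring
  -- integrability of F ε for positive ε
  have hF_int : ∀ ε : ℝ, ε ∈ Set.Ioi (0:ℝ) → Integrable (F ε) (μ.prod ν) := by
    intro ε hε
    exact hg_int.mono' (hF_meas ε) (Filter.Eventually.of_forall (hbound ε hε))
  -- the limit function, in split form
  set φ : Sph n × ℝ → ℝ := fun z => (k z.1 * -(a z.1 ^ 2 / 2)) * (z.2 ^ 2 * p z.2) with hφ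
  -- pointwise convergence
  have hlim : ∀ z : Sph n × ℝ, Tendsto (fun ε => F ε z) (nhdsWithin 0 (Set.Ioi 0))
      (nhds (φ z)) := by
    intro z
    have hc := tendsto_cos_scaled (a z.1 * z.2)
    have h2 : Tendsto (fun ε : ℝ => k z.1 * p z.2 * ((Real.cos (ε * (a z.1 * z.2)) - 1) / ε ^ 2))
        (nhdsWithin 0 (Set.Ioi 0)) (nhds (k z.1 * p z.2 * -((a z.1 * z.2) ^ 2 / 2))) :=
      hc.const_mul _
    have he1 : (fun ε : ℝ => k z.1 * p z.2 * ((Real.cos (ε * (a z.1 * z.2)) - 1) / ε ^ 2))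
        = fun ε => F ε z := by
      funext ε
      simp only [hF, ← mul_assoc, mul_div_assoc]
    have he2 : k z.1 * p z.2 * -((a z.1 * z.2) ^ 2 / 2) = φ z := by
      simp only [hφ]; ring
    rw [he1, he2] at h2
    exact h2
  -- dominated convergence on the product space
  have hDCT : Tendsto (fun ε : ℝ => ∫ z, F ε z ∂(μ.prod ν)) (nhdsWithin 0 (Set.Ioi 0))
      (nhds (∫ z, φ z ∂(μ.prod ν))) := by
    apply tendsto_integral_filter_of_dominated_convergence g
    · exact Filter.Eventually.of_forall hF_meas
    · filter_upwards [self_mem_nhdsWithin] with ε hε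
      exact Filter.Eventually.of_forall (hbound ε hε)
    · exact hg_int
    · exact Filter.Eventually.of_forall hlim
  -- compute the limit integral
  have hsmul : ‖ξ‖ • (‖ξ‖⁻¹ • ξ) = ξ := by
    rw [smul_smul, mul_inv_cancel₀ (norm_ne_zero_iff.mpr hξ), one_smul]
  have hn0 : ‖ξ‖ ≠ 0 := norm_ne_zero_iff.mpr hξ
  have hainner : ∀ v : Sph n, a v = ‖ξ‖ * (inner ℝ (v : Euc n) (‖ξ‖⁻¹ • ξ) : ℝ) := by
    intro v
    have h := real_inner_smul_right ((v : Euc n)) ξ ‖ξ‖⁻¹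
    simp only [ha, h]
    field_simp
  have hval : ∫ z, φ z ∂(μ.prod ν)
      = -(D₀ / 2 * ∫ v : Sph n, κ (inner ℝ (v : Euc n) (v' : Euc n)) *
          (inner ℝ (v : Euc n) (‖ξ‖⁻¹ • ξ) : ℝ) ^ 2 ∂(sphμ n)) * ‖ξ‖ ^ 2 := by
    have hsplit : ∫ z, φ z ∂(μ.prod ν)
        = (∫ v, k v * -(a v ^ 2 / 2) ∂μ) * ∫ s, s ^ 2 * p s ∂ν :=
      integral_prod_mul (μ := μ) (ν := ν) (fun v => k v * -(a v ^ 2 / 2)) (fun s => s ^ 2 * p s)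
    rw [hsplit, hD₀]
    have h1 : (fun v : Sph n => k v * -(a v ^ 2 / 2))
        = fun v : Sph n => (-(‖ξ‖ ^ 2) / 2) * (κ (inner ℝ (v : Euc n) (v' : Euc n)) *
            (inner ℝ (v : Euc n) (‖ξ‖⁻¹ • ξ) : ℝ) ^ 2) := by
      funext v
      rw [hainner v]
      simp only [hk, real_inner_comm]
      ring
    rw [h1, integral_const_mul]
    ring
  rw [← hval]
  -- identify the iterated integral with the product integral, eventually
  refine hDCT.congr' ?_
  filter_upwards [self_mem_nhdsWithin] with ε hε
  have hint := hF_int ε hε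
  have := MeasureTheory.integral_integral (μ := μ) (ν := ν)
    (f := fun v s => F ε (v, s)) (by exact hint)
  change ∫ x, ∫ y, F ε (x, y) ∂ν ∂μ = ∫ z, F ε z ∂(μ.prod ν) at this
  rw [← this]
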